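/- The Werner state σ_{1/2} = (1/2)|φ⁺⟩⟨φ⁺| + (1/8)I₄ satisfies S(σ_{1/2}) ≥ 1 (hence belongs to ACVENN), but its partial transpose has a negative eigenvalue, so σ_{1/2} is not separable and therefore not absolutely separable. -/

import Mathlib

open Matrix Finset
open scoped Kronecker ComplexOrder Classical

noncomputable section

/-- A quantum state: positive semidefinite matrix of trace 1. -/
def IsState {n : ℕ} (ρ : Matrix (Fin n) (Fin n) ℂ) : Prop :=
  ρ.PosSemidef ∧ ρ.trace = 1

/-- Von Neumann entropy `S(ρ) = -∑ᵢ λᵢ log₂ λᵢ` over the eigenvalues of `ρ`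
(with the convention `0 · log₂ 0 = 0`, which holds since `Real.logb 2 0 = 0`). -/
noncomputable def vnEntropy {n : ℕ} (ρ : Matrix (Fin n) (Fin n) ℂ) : ℝ :=
  if h : ρ.IsHermitian then -∑ i, h.eigenvalues i * Real.logb 2 (h.eigenvalues i) else 0

/-- Reduced state `ρ_A`: partial trace over the second tensor factor,
using the ordered product basis `|00⟩,|01⟩,|10⟩,|11⟩`, i.e. `|ab⟩ ↦ 2a+b`. -/
def ptraceB (ρ : Matrix (Fin 4) (Fin 4) ℂ) : Matrix (Fin 2) (Fin 2) ℂ :=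
  Matrix.of fun i j => ∑ k : Fin 2,
    ρ ⟨2 * i.val + k.val, by omega⟩ ⟨2 * j.val + k.val, by omega⟩

/-- Reduced state `ρ_B`: partial trace over the first tensor factor. -/
def ptraceA (ρ : Matrix (Fin 4) (Fin 4) ℂ) : Matrix (Fin 2) (Fin 2) ℂ :=
  Matrix.of fun i j => ∑ k : Fin 2,
    ρ ⟨2 * k.val + i.val, by omega⟩ ⟨2 * k.val + j.val, by omega⟩

/-- Conditional von Neumann entropy `S(A|B) = S(ρ_AB) - S(ρ_A)`. -/
def condEntropy (ρ : Matrix (Fin 4) (Fin 4) ℂ) : ℝ :=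
  vnEntropy ρ - vnEntropy (ptraceB ρ)

/-- Rank-one projector `|v⟩⟨v|`. -/
def proj (v : Fin 4 → ℂ) : Matrix (Fin 4) (Fin 4) ℂ := Matrix.vecMulVec v (star v)

/-- The Bell basis `|φ⁺⟩, |φ⁻⟩, |ψ⁺⟩, |ψ⁻⟩`. -/
noncomputable def bell : Fin 4 → Fin 4 → ℂ :=
  ![![(Real.sqrt 2 : ℂ)⁻¹, 0, 0, (Real.sqrt 2 : ℂ)⁻¹],
    ![(Real.sqrt 2 : ℂ)⁻¹, 0, 0, -(Real.sqrt 2 : ℂ)⁻¹],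
    ![0, (Real.sqrt 2 : ℂ)⁻¹, (Real.sqrt 2 : ℂ)⁻¹, 0],
    ![0, (Real.sqrt 2 : ℂ)⁻¹, -(Real.sqrt 2 : ℂ)⁻¹, 0]]

/-- Kronecker product of two one-qubit matrices as a `4 × 4` matrix,
with the index identification `(a,b) ↦ 2a+b`. -/
def kron (A B : Matrix (Fin 2) (Fin 2) ℂ) : Matrix (Fin 4) (Fin 4) ℂ :=
  Matrix.reindex finProdFinEquiv finProdFinEquiv (A ⊗ₖ B)

/-- A two-qubit state is separable if it is a convex combination of product states. -/
def Separable (σ : Matrix (Fin 4) (Fin 4) ℂ) : Prop :=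
  ∃ (m : ℕ) (p : Fin m → ℝ) (α β : Fin m → Matrix (Fin 2) (Fin 2) ℂ),
    (∀ i, 0 ≤ p i) ∧ (∑ i, p i = 1) ∧ (∀ i, IsState (α i)) ∧ (∀ i, IsState (β i)) ∧
    σ = ∑ i, (p i : ℂ) • kron (α i) (β i)

/-- The Werner state `σ_p = p|φ⁺⟩⟨φ⁺| + (1-p) I₄/4`. -/
noncomputable def werner (p : ℝ) : Matrix (Fin 4) (Fin 4) ℂ :=
  (p : ℂ) • proj (bell 0) + (((1 - p) / 4 : ℝ) : ℂ) • 1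

/-- Partial transposition on the second tensor factor. -/
def ptransposeB (ρ : Matrix (Fin 4) (Fin 4) ℂ) : Matrix (Fin 4) (Fin 4) ℂ :=
  Matrix.of fun i j =>
    ρ ⟨2 * (i.val / 2) + j.val % 2, by omega⟩ ⟨2 * (j.val / 2) + i.val % 2, by omega⟩

lemma werner_eq : werner (1/2) = Matrix.of
    ![![3/8, 0, 0, 1/4], ![0, 1/8, 0, 0], ![0, 0, 1/8, 0], ![1/4, 0, 0, 3/8]] := by
  have h2 : ((Real.sqrt 2 : ℂ))⁻¹ * ((Real.sqrt 2 : ℂ))⁻¹ = (2:ℂ)⁻¹ := by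
    rw [← mul_inv, ← Complex.ofReal_mul, Real.mul_self_sqrt (by norm_num)]
    norm_num
  ext i j
  fin_cases i <;> fin_cases j <;>
    simp [werner, proj, bell, Matrix.vecMulVec_apply, Matrix.one_apply, Matrix.vecHead,
      Matrix.vecTail, h2, -Matrix.cons_vecMulVec] <;>
    norm_num <;> ring_nf <;> simp [h2] <;> norm_num
lemma f40 (h : 0 < 4) : (⟨0, h⟩ : Fin 4) = 0 := rfl
lemma f41 (h : 1 < 4) : (⟨1, h⟩ : Fin 4) = 1 := rfl
lemma f42 (h : 2 < 4) : (⟨2, h⟩ : Fin 4) = 2 := rfl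
lemma f43 (h : 3 < 4) : (⟨3, h⟩ : Fin 4) = 3 := rfl
lemma fv0 : ((0 : Fin 4) : ℕ) = 0 := rfl
lemma fv1 : ((1 : Fin 4) : ℕ) = 1 := rfl
lemma fv2 : ((2 : Fin 4) : ℕ) = 2 := rfl
lemma fv3 : ((3 : Fin 4) : ℕ) = 3 := rfl
set_option maxHeartbeats 1000000 in
lemma det_sub_werner (x : ℂ) :
    (algebraMap ℂ (Matrix (Fin 4) (Fin 4) ℂ) x - werner (1/2)).det
      = (x - 5/8) * (x - 1/8)^3 := by
  have h : algebraMap ℂ (Matrix (Fin 4) (Fin 4) ℂ) x - werner (1/2)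
      = !![x-3/8, 0, 0, -(1/4); 0, x-1/8, 0, 0; 0, 0, x-1/8, 0; -(1/4), 0, 0, x-3/8] := by
    rw [werner_eq, Matrix.algebraMap_eq_diagonal]
    ext i j
    fin_cases i <;> fin_cases j <;>
      simp [Matrix.diagonal, Matrix.vecHead, Matrix.vecTail] <;> ring
  rw [h]
  rw [show ((!![x-3/8, 0, 0, -(1/4); 0, x-1/8, 0, 0; 0, 0, x-1/8, 0; -(1/4), 0, 0, x-3/8]).det)
    = _ from Matrix.det_succ_row_zero _]
  simp [Fin.sum_univ_succ, Matrix.det_fin_three, Fin.succAbove]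
  ring
lemma spec_werner_conj (U : Matrix (Fin 4) (Fin 4) ℂ) (hU : U ∈ Matrix.unitaryGroup (Fin 4) ℂ)
    (x : ℂ) (hx : x ∈ spectrum ℂ (U * werner (1/2) * Uᴴ)) : x = 5/8 ∨ x = 1/8 := by
  have hUU : U * Uᴴ = 1 := by
    simpa [Matrix.star_eq_conjTranspose] using Matrix.mem_unitaryGroup_iff.mp hU
  have hUU' : Uᴴ * U = 1 := by
    simpa [Matrix.star_eq_conjTranspose] using Matrix.mem_unitaryGroup_iff'.mp hU
  rw [spectrum.mem_iff, Matrix.isUnit_iff_isUnit_det, isUnit_iff_ne_zero, not_not] at hx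
  have key : algebraMap ℂ (Matrix (Fin 4) (Fin 4) ℂ) x - U * werner (1/2) * Uᴴ
      = U * (algebraMap ℂ (Matrix (Fin 4) (Fin 4) ℂ) x - werner (1/2)) * Uᴴ := by
    rw [mul_sub, sub_mul]
    congr 1
    rw [← Algebra.commutes x U, mul_assoc, hUU, mul_one]
  rw [key, Matrix.det_mul, Matrix.det_mul, mul_comm, ← mul_assoc, ← Matrix.det_mul,
    hUU', Matrix.det_one, one_mul, det_sub_werner] at hx
  rcases mul_eq_zero.mp hx with h | h
  · left; linear_combination h
  · right
    have := pow_eq_zero_iff (n := 3) (by norm_num) |>.mp h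
    linear_combination this
lemma trace_eq_sum_eigen {n : ℕ} (A : Matrix (Fin n) (Fin n) ℂ) (hA : A.IsHermitian) :
    A.trace = ∑ i, (hA.eigenvalues i : ℂ) := by
  conv_lhs => rw [hA.spectral_theorem, Unitary.conjStarAlgAut_apply]
  rw [Matrix.trace_mul_comm, ← mul_assoc]
  have h1 : (star (hA.eigenvectorUnitary : Matrix (Fin n) (Fin n) ℂ)) *
      (hA.eigenvectorUnitary : Matrix (Fin n) (Fin n) ℂ) = 1 := by
    exact_mod_cast Unitary.coe_star_mul_self hA.eigenvectorUnitary
  rw [h1, one_mul, Matrix.trace_diagonal]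
  rfl

lemma vnEntropy_eq_of (B : Matrix (Fin 4) (Fin 4) ℂ) (hH : B.IsHermitian)
    (hs : ∀ x : ℂ, x ∈ spectrum ℂ B → x = 5/8 ∨ x = 1/8) (ht : B.trace = 1) :
    vnEntropy B = -(5/8 * Real.logb 2 (5/8) + 3 * (1/8 * Real.logb 2 (1/8))) := by
  have hev : ∀ i, hH.eigenvalues i = 5/8 ∨ hH.eigenvalues i = 1/8 := by
    intro i
    have h1 : ((hH.eigenvalues i : ℝ) : ℂ) ∈ spectrum ℂ B :=
      spectrum.algebraMap_mem ℂ (hH.eigenvalues_mem_spectrum_real i)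
    rcases hs _ h1 with h | h
    · left
      rw [show (5/8:ℂ) = ((5/8:ℝ):ℂ) by norm_num] at h
      exact Complex.ofReal_inj.mp h
    · right
      rw [show (1/8:ℂ) = ((1/8:ℝ):ℂ) by norm_num] at h
      exact Complex.ofReal_inj.mp h
  have hsum : ∑ i, hH.eigenvalues i = 1 := by
    have h2 := (trace_eq_sum_eigen B hH).symm.trans ht
    have h3 : ((∑ i, hH.eigenvalues i : ℝ) : ℂ) = ((1:ℝ):ℂ) := by push_cast; exact h2
    exact_mod_cast h3
  rw [vnEntropy, dif_pos hH]
  rw [Fin.sum_univ_four] at hsum ⊢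
  rcases hev 0 with h0 | h0 <;> rcases hev 1 with h1 | h1 <;> rcases hev 2 with h2 | h2 <;>
    rcases hev 3 with h3 | h3 <;> rw [h0, h1, h2, h3] at hsum ⊢
  all_goals try norm_num at hsum
  all_goals ring

lemma num_bound : (1:ℝ) ≤ -(5/8 * Real.logb 2 (5/8) + 3 * (1/8 * Real.logb 2 (1/8))) := by
  have l2 : 0 < Real.log 2 := Real.log_pos (by norm_num)
  have h8 : Real.log (8:ℝ) = 3 * Real.log 2 := by
    rw [show (8:ℝ) = 2^(3:ℕ) by norm_num, Real.log_pow]; push_cast; ring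
  have h58 : Real.logb 2 (5/8 : ℝ) = (Real.log 5 - 3*Real.log 2)/Real.log 2 := by
    rw [Real.logb, Real.log_div (by norm_num) (by norm_num), h8]
  have h18 : Real.logb 2 (1/8 : ℝ) = -(3*Real.log 2)/Real.log 2 := by
    rw [Real.logb, Real.log_div (by norm_num) (by norm_num), Real.log_one, h8]; ring
  have key : 5 * Real.log 5 ≤ 16 * Real.log 2 := by
    have h := (Real.log_le_log_iff (by norm_num : (0:ℝ) < 3125) (by norm_num)).mpr
      (by norm_num : (3125:ℝ) ≤ 65536)
    rw [show (3125:ℝ) = 5^(5:ℕ) by norm_num, show (65536:ℝ) = 2^(16:ℕ) by norm_num,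
      Real.log_pow, Real.log_pow] at h
    push_cast at h; linarith
  rw [h58, h18]
  have hL : Real.log 2 ≠ 0 := ne_of_gt l2
  have expand : -(5/8 * ((Real.log 5 - 3*Real.log 2)/Real.log 2)
        + 3 * (1/8 * (-(3*Real.log 2)/Real.log 2)))
      = 3 - 5/8 * (Real.log 5 / Real.log 2) := by
    field_simp
    ring
  rw [expand]
  have hd : Real.log 5 / Real.log 2 ≤ 16/5 := by
    rw [div_le_iff₀ l2]; linarith
  linarith
lemma complex_smul_nonneg {c : ℝ} (hc : 0 ≤ c) {z : ℂ} (hz : 0 ≤ z) : 0 ≤ (c : ℂ) * z := by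
  rw [Complex.le_def] at hz ⊢
  simp only [Complex.mul_re, Complex.mul_im, Complex.ofReal_re, Complex.ofReal_im,
    Complex.zero_re, Complex.zero_im] at *
  constructor
  · nlinarith [hz.1]
  · rw [← hz.2]; ring

lemma proj_psd (v : Fin 4 → ℂ) : (proj v).PosSemidef := by
  rw [Matrix.posSemidef_iff_dotProduct_mulVec]
  constructor
  · ext i j
    simp only [proj, Matrix.conjTranspose_apply, Matrix.vecMulVec_apply, Pi.star_apply,
      star_mul', star_star]
    ring
  · intro x
    have h : (Matrix.vecMulVec v (star v)) *ᵥ x = (star v ⬝ᵥ x) • v := by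
      ext i
      simp only [Matrix.mulVec, Matrix.vecMulVec_apply, dotProduct, Pi.smul_apply,
        smul_eq_mul, Finset.sum_mul, Finset.mul_sum]
      exact Finset.sum_congr rfl fun k _ => by ring
    rw [proj, h, dotProduct_smul]
    have h2 : star x ⬝ᵥ v = star (star v ⬝ᵥ x) := by
      rw [star_dotProduct v x, star_star]
    rw [smul_eq_mul, h2, mul_comm]
    exact star_mul_self_nonneg _
lemma werner_half_psd : (werner (1/2)).PosSemidef := by
  have h1 : ((1:ℝ)/2 : ℂ) • proj (bell 0) = ((1:ℂ)/2) • proj (bell 0) := by norm_num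
  have hp := proj_psd (bell 0)
  have hI : (1 : Matrix (Fin 4) (Fin 4) ℂ).PosSemidef := Matrix.PosSemidef.one
  rw [Matrix.posSemidef_iff_dotProduct_mulVec]
  constructor
  · unfold werner
    apply Matrix.IsHermitian.add
    · rw [Matrix.IsHermitian, Matrix.conjTranspose_smul, hp.1]
      norm_num
    · rw [Matrix.IsHermitian, Matrix.conjTranspose_smul, hI.1]
      norm_num
  · intro x
    unfold werner
    rw [Matrix.add_mulVec, dotProduct_add, Matrix.smul_mulVec,
      Matrix.smul_mulVec, dotProduct_smul, dotProduct_smul]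
    apply add_nonneg
    · rw [show ((1/2 : ℝ) : ℂ) = (((1:ℝ)/2 : ℝ) : ℂ) by norm_num, smul_eq_mul]
      exact complex_smul_nonneg (by norm_num) (hp.dotProduct_mulVec_nonneg x)
    · rw [smul_eq_mul]
      exact complex_smul_nonneg (by norm_num) (hI.dotProduct_mulVec_nonneg x)

lemma werner_half_trace : (werner (1/2)).trace = 1 := by
  rw [werner_eq]
  rw [Matrix.trace, Fin.sum_univ_four]
  simp [Matrix.cons_val_two, Matrix.cons_val_three]
  norm_num

lemma conj_state (U : Matrix (Fin 4) (Fin 4) ℂ) (hU : U ∈ Matrix.unitaryGroup (Fin 4) ℂ) :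
    (U * werner (1/2) * Uᴴ).PosSemidef ∧ (U * werner (1/2) * Uᴴ).trace = 1 := by
  have hUU' : Uᴴ * U = 1 := by
    simpa [Matrix.star_eq_conjTranspose] using Matrix.mem_unitaryGroup_iff'.mp hU
  refine ⟨werner_half_psd.mul_mul_conjTranspose_same U, ?_⟩
  rw [Matrix.trace_mul_comm, ← mul_assoc, hUU', one_mul, werner_half_trace]
lemma herm_apply {n : Type*} {ρ : Matrix n n ℂ} (h : ρ.IsHermitian) (a b : n) :
    star (ρ a b) = ρ b a := by
  conv_rhs => rw [← h.eq]
  simp [Matrix.conjTranspose_apply]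

lemma ptraceB_herm {ρ : Matrix (Fin 4) (Fin 4) ℂ} (h : ρ.IsHermitian) :
    (ptraceB ρ).IsHermitian := by
  ext i j
  simp only [Matrix.conjTranspose_apply, ptraceB, Matrix.of_apply, star_sum]
  exact Finset.sum_congr rfl fun k _ => herm_apply h _ _

lemma ptraceB_psd {ρ : Matrix (Fin 4) (Fin 4) ℂ} (h : ρ.PosSemidef) :
    (ptraceB ρ).PosSemidef := by
  refine Matrix.posSemidef_iff_dotProduct_mulVec.mpr ⟨ptraceB_herm h.1, fun y => ?_⟩
  have key : star y ⬝ᵥ (ptraceB ρ) *ᵥ y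
      = star ![y 0, 0, y 1, 0] ⬝ᵥ ρ *ᵥ ![y 0, 0, y 1, 0]
        + star ![0, y 0, 0, y 1] ⬝ᵥ ρ *ᵥ ![0, y 0, 0, y 1] := by
    simp only [ptraceB, dotProduct, Matrix.mulVec, Matrix.of_apply,
      Fin.sum_univ_two, Fin.sum_univ_four, Pi.star_apply]
    norm_num [f40, f41, f42, f43, Matrix.cons_val_two, Matrix.cons_val_three]
    ring
  rw [key]
  exact add_nonneg (h.dotProduct_mulVec_nonneg _) (h.dotProduct_mulVec_nonneg _)

lemma ptraceB_trace (ρ : Matrix (Fin 4) (Fin 4) ℂ) : (ptraceB ρ).trace = ρ.trace := by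
  simp only [Matrix.trace, Matrix.diag, ptraceB, Matrix.of_apply, Fin.sum_univ_two,
    Fin.sum_univ_four]
  norm_num [f40, f41, f42, f43]
  ring

lemma neg_mul_log_le (p : ℝ) (hp : 0 ≤ p) : -(p * Real.log p) ≤ p * Real.log 2 + (1/2 - p) := by
  rcases eq_or_lt_of_le hp with h | h
  · rw [← h]; norm_num
  · have hlog := Real.log_le_sub_one_of_pos (show (0:ℝ) < 1/(2*p) by positivity)
    rw [one_div, Real.log_inv, Real.log_mul (by norm_num) (ne_of_gt h)] at hlog
    have := mul_le_mul_of_nonneg_left hlog (le_of_lt h)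
    have hne : p ≠ 0 := ne_of_gt h
    calc -(p * Real.log p) = p * (-(Real.log 2 + Real.log p)) + p * Real.log 2 := by ring
    _ ≤ p * ((2*p)⁻¹ - 1) + p * Real.log 2 := by linarith [this]
    _ = p * Real.log 2 + (1/2 - p) := by field_simp; ring

lemma binEnt {a b : ℝ} (ha : 0 ≤ a) (hb : 0 ≤ b) (hab : a + b = 1) :
    -(a * Real.logb 2 a + b * Real.logb 2 b) ≤ 1 := by
  have l2 : 0 < Real.log 2 := Real.log_pos (by norm_num)
  have h1 := neg_mul_log_le a ha
  have h2 := neg_mul_log_le b hb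
  rw [Real.logb, Real.logb]
  have heq : -(a * (Real.log a / Real.log 2) + b * (Real.log b / Real.log 2))
      = (-(a * Real.log a) + -(b * Real.log b)) / Real.log 2 := by ring
  rw [heq, div_le_one l2]
  nlinarith [h1, h2, l2.le, hab]

lemma entropy2_le (τ : Matrix (Fin 2) (Fin 2) ℂ) (hpsd : τ.PosSemidef) (htr : τ.trace = 1) :
    vnEntropy τ ≤ 1 := by
  have hH := hpsd.1
  have hsum : hH.eigenvalues 0 + hH.eigenvalues 1 = 1 := by
    have h2 := (trace_eq_sum_eigen τ hH).symm.trans htr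
    rw [Fin.sum_univ_two] at h2
    have h3 : ((hH.eigenvalues 0 + hH.eigenvalues 1 : ℝ) : ℂ) = ((1:ℝ):ℂ) := by
      push_cast; exact h2
    exact_mod_cast h3
  rw [vnEntropy, dif_pos hH, Fin.sum_univ_two]
  exact binEnt (hpsd.eigenvalues_nonneg 0) (hpsd.eigenvalues_nonneg 1) hsum
lemma psd_real_smul {n : Type*} [Fintype n] {A : Matrix n n ℂ} (hA : A.PosSemidef) {c : ℝ}
    (hc : 0 ≤ c) : ((c : ℂ) • A).PosSemidef := by
  rw [Matrix.posSemidef_iff_dotProduct_mulVec]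
  constructor
  · rw [Matrix.IsHermitian, Matrix.conjTranspose_smul, hA.1]
    congr 1
    simp [Complex.conj_ofReal]
  · intro x
    rw [Matrix.smul_mulVec, dotProduct_smul, smul_eq_mul]
    exact complex_smul_nonneg hc (hA.dotProduct_mulVec_nonneg x)

lemma kron_conjTranspose (C D : Matrix (Fin 2) (Fin 2) ℂ) : (C ⊗ₖ D)ᴴ = Cᴴ ⊗ₖ Dᴴ := by
  ext ⟨a, b⟩ ⟨c, d⟩
  simp [Matrix.conjTranspose_apply, Matrix.kroneckerMap_apply]

lemma kron_psd {A B : Matrix (Fin 2) (Fin 2) ℂ} (hA : A.PosSemidef) (hB : B.PosSemidef) :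
    (kron A B).PosSemidef := by
  have : (A ⊗ₖ B).PosSemidef := hA.kronecker hB
  unfold kron
  rw [Matrix.reindex_apply]
  exact this.submatrix _

lemma ptransposeB_smul (c : ℂ) (M : Matrix (Fin 4) (Fin 4) ℂ) :
    ptransposeB (c • M) = c • ptransposeB M := by
  ext i j; simp [ptransposeB]

lemma ptransposeB_sum {m : ℕ} (M : Fin m → Matrix (Fin 4) (Fin 4) ℂ) :
    ptransposeB (∑ i, M i) = ∑ i, ptransposeB (M i) := by
  ext i j; simp [ptransposeB, Matrix.sum_apply]

lemma ptransposeB_kron (A B : Matrix (Fin 2) (Fin 2) ℂ) :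
    ptransposeB (kron A B) = kron A Bᵀ := by
  ext i j
  fin_cases i <;> fin_cases j <;> rfl

lemma sep_pt_psd {σ : Matrix (Fin 4) (Fin 4) ℂ} (h : Separable σ) :
    (ptransposeB σ).PosSemidef := by
  obtain ⟨m, p, α, β, hp, -, hα, hβ, rfl⟩ := h
  rw [ptransposeB_sum]
  have : ∀ i : Fin m, (ptransposeB ((p i : ℂ) • kron (α i) (β i))).PosSemidef := by
    intro i
    rw [ptransposeB_smul, ptransposeB_kron]
    exact psd_real_smul (kron_psd (hα i).1 ((hβ i).1.transpose)) (hp i)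
  exact Finset.sum_induction _ _ (fun a b ha hb => ha.add hb) Matrix.PosSemidef.zero
    (fun i _ => this i)

lemma pt_eigen : (ptransposeB (werner (1/2))).mulVec ![0, 1, -1, 0]
    = (((-1/8 : ℝ)) : ℂ) • ![0, 1, -1, 0] := by
  rw [werner_eq]
  ext i
  fin_cases i <;>
    simp [ptransposeB, Matrix.mulVec, dotProduct, Fin.sum_univ_four,
      Matrix.vecHead, Matrix.vecTail] <;>
    norm_num [f40, f41, f42, f43, fv0, fv1, fv2, fv3]

lemma not_sep_werner : ¬ Separable (werner (1/2)) := by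
  intro h
  have hpsd := sep_pt_psd h
  have hq := hpsd.dotProduct_mulVec_nonneg ![0, 1, -1, 0]
  rw [pt_eigen, dotProduct_smul] at hq
  have hdot : star ![(0:ℂ), 1, -1, 0] ⬝ᵥ ![(0:ℂ), 1, -1, 0] = 2 := by
    simp [dotProduct, Fin.sum_univ_four]
    norm_num
  rw [hdot, smul_eq_mul] at hq
  have : (((-1/8 : ℝ)) : ℂ) * 2 = ((-1/4 : ℝ) : ℂ) := by push_cast; ring
  rw [this] at hq
  rw [Complex.le_def] at hq
  simp at hq
  norm_num at hq

/-- The Werner state `σ_{1/2}` satisfies `S(σ_{1/2}) ≥ 1` (hence is in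
ACVENN), but its partial transpose has a negative eigenvalue, so it is not separable
and therefore not absolutely separable. -/
theorem stmt_8 :
    1 ≤ vnEntropy (werner (1 / 2)) ∧
    (IsState (werner (1 / 2)) ∧
      ∀ U ∈ Matrix.unitaryGroup (Fin 4) ℂ, 0 ≤ condEntropy (U * werner (1 / 2) * Uᴴ)) ∧
    (∃ (c : ℝ) (v : Fin 4 → ℂ), c < 0 ∧ v ≠ 0 ∧
      (ptransposeB (werner (1 / 2))).mulVec v = (c : ℂ) • v) ∧
    ¬ Separable (werner (1 / 2)) ∧
    ¬ (∀ U ∈ Matrix.unitaryGroup (Fin 4) ℂ, Separable (U * werner (1 / 2) * Uᴴ)) := by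
  have hW1 : (1 : Matrix (Fin 4) (Fin 4) ℂ) * werner (1/2) * (1 : Matrix (Fin 4) (Fin 4) ℂ)ᴴ
      = werner (1/2) := by
    rw [Matrix.conjTranspose_one, one_mul, mul_one]
  have hspecW : ∀ x : ℂ, x ∈ spectrum ℂ (werner (1/2)) → x = 5/8 ∨ x = 1/8 := fun x hx =>
    spec_werner_conj 1 (one_mem _) x (by rwa [hW1])
  have hent : vnEntropy (werner (1/2))
      = -(5/8 * Real.logb 2 (5/8) + 3 * (1/8 * Real.logb 2 (1/8))) :=
    vnEntropy_eq_of _ werner_half_psd.1 hspecW werner_half_trace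
  have h1 : 1 ≤ vnEntropy (werner (1/2)) := by rw [hent]; exact num_bound
  refine ⟨h1, ⟨⟨werner_half_psd, werner_half_trace⟩, ?_⟩, ?_, not_sep_werner, ?_⟩
  · intro U hU
    obtain ⟨hpsd, htr⟩ := conj_state U hU
    have hB : vnEntropy (U * werner (1/2) * Uᴴ)
        = -(5/8 * Real.logb 2 (5/8) + 3 * (1/8 * Real.logb 2 (1/8))) :=
      vnEntropy_eq_of _ hpsd.1 (spec_werner_conj U hU) htr
    have hA : vnEntropy (ptraceB (U * werner (1/2) * Uᴴ)) ≤ 1 :=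
      entropy2_le _ (ptraceB_psd hpsd) (by rw [ptraceB_trace]; exact htr)
    rw [condEntropy, hB]
    linarith [num_bound]
  · refine ⟨-1/8, ![0, 1, -1, 0], by norm_num, ?_, ?_⟩
    · intro h
      have := congrFun h 1
      norm_num at this
    · exact pt_eigen
  · intro hall
    have := hall 1 (one_mem _)
    rw [hW1] at this
    exact not_sep_werner this
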